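/- For 2-pebbling on the n-dimensional hypercube Q_n, the pebbling number is 2^n: every configuration of 2^n pebbles on the vertices of Q_n is solvable, and there exists a configuration of 2^n - 1 pebbles that is not solvable. -/

import Mathlib

/-- A `q`-pebbling move: remove `q` pebbles from a vertex `u` (which has at least `q`
pebbles) and add one pebble to a neighbour `u'`. -/
def PebStep {V : Type*} [DecidableEq V] (q : ℕ) (G : SimpleGraph V) (D D' : V → ℕ) : Prop :=
  ∃ u u', G.Adj u u' ∧ q ≤ D u ∧
    D' = fun w => if w = u then D u - q else if w = u' then D u' + 1 else D w

/-- A configuration `D` is `v`-solvable if a finite sequence of `q`-pebbling moves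
places a pebble on `v`. -/
def Solvable {V : Type*} [DecidableEq V] (q : ℕ) (G : SimpleGraph V) (D : V → ℕ) (v : V) : Prop :=
  ∃ D', Relation.ReflTransGen (PebStep q G) D D' ∧ 1 ≤ D' v

/-- The hypercube graph `Q_n` on vertex set `{0,1}^n`: two vertices are adjacent iff
they differ in exactly one coordinate. -/
def cubeGraph (n : ℕ) : SimpleGraph (Fin n → Bool) :=
  SimpleGraph.fromRel (fun x y => (Finset.univ.filter fun i => x i ≠ y i).card = 1)

section General
variable {V : Type*} [DecidableEq V] {G : SimpleGraph V}

def Moves (G : SimpleGraph V) (D D' : V → ℕ) : Prop :=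
  Relation.ReflTransGen (PebStep 2 G) D D'

def Reach (G : SimpleGraph V) (k : ℕ) (D : V → ℕ) (v : V) : Prop :=
  ∃ D', Moves G D D' ∧ k ≤ D' v

theorem pebstep_add {D D' E : V → ℕ} (h : PebStep 2 G D D') :
    PebStep 2 G (D + E) (D' + E) := by
  obtain ⟨u, u', hadj, hu, rfl⟩ := h
  refine ⟨u, u', hadj, le_trans hu (by simp), ?_⟩
  funext w
  simp only [Pi.add_apply]
  by_cases h1 : w = u <;> by_cases h2 : w = u' <;> simp only [h1, h2, if_true, if_false, eq_self_iff_true, if_pos, if_neg, ite_true, ite_false] <;> first | omega | (split_ifs with h3 <;> first | omega | (subst h3; omega))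

theorem moves_add {D D' E : V → ℕ} (h : Moves G D D') : Moves G (D + E) (D' + E) :=
  Relation.ReflTransGen.lift (· + E) (fun _ _ => pebstep_add) _ _ h

theorem moves_add_left {D D' E : V → ℕ} (h : Moves G D D') : Moves G (E + D) (E + D') := by
  have := moves_add (E := E) h
  rwa [add_comm, add_comm D' E] at this

theorem reach_add {D₁ D₂ : V → ℕ} {k₁ k₂ : ℕ} {v : V}
    (h₁ : Reach G k₁ D₁ v) (h₂ : Reach G k₂ D₂ v) :
    Reach G (k₁ + k₂) (D₁ + D₂) v := by
  obtain ⟨E₁, m₁, hk₁⟩ := h₁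
  obtain ⟨E₂, m₂, hk₂⟩ := h₂
  exact ⟨E₁ + E₂, (moves_add m₁).trans (moves_add_left m₂), by simp; omega⟩

theorem reach_of_moves {D D' : V → ℕ} {k : ℕ} {v : V}
    (h : Moves G D D') (h' : Reach G k D' v) : Reach G k D v := by
  obtain ⟨E, m, hk⟩ := h'
  exact ⟨E, h.trans m, hk⟩

theorem reach_mono {D E : V → ℕ} {k : ℕ} {v : V} (hle : ∀ w, D w ≤ E w)
    (h : Reach G k D v) : Reach G k E v := by
  obtain ⟨D', m, hk⟩ := h
  have : E = D + (E - D) := by funext w; have := hle w; simp [Pi.sub_apply]; omega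
  rw [this]
  exact ⟨D' + (E - D), moves_add m, by simp only [Pi.add_apply]; omega⟩

/-- From 2 pebbles on a neighbour of `v`, get one pebble to `v`. -/
theorem reach_two_step {D : V → ℕ} {v' v : V} (hadj : G.Adj v' v)
    (h : Reach G 2 D v') : Reach G 1 D v := by
  obtain ⟨D', m, hk⟩ := h
  have hne : v ≠ v' := fun h => by subst h; exact G.irrefl hadj
  refine ⟨_, m.tail ⟨v', v, hadj, hk, rfl⟩, ?_⟩
  simp [hne]

end General

section Cube
open Fin

theorem cube_adj {n : ℕ} {x y : Fin n → Bool} :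
    (cubeGraph n).Adj x y ↔ hammingDist x y = 1 := by
  have hd : ∀ a b : Fin n → Bool, hammingDist a b =
      (Finset.univ.filter fun i => a i ≠ b i).card := fun _ _ => rfl
  unfold cubeGraph
  rw [SimpleGraph.fromRel_adj]
  constructor
  · rintro ⟨hne, h | h⟩
    · rw [hd]; exact h
    · rw [hammingDist_comm, hd]; exact h
  · intro h
    refine ⟨?_, Or.inl (by rw [← hd]; exact h)⟩
    rintro rfl
    rw [hammingDist_self x] at h; omega

theorem hammingDist_snoc {n : ℕ} (x y : Fin n → Bool) (c d : Bool) :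
    hammingDist (Fin.snoc x c : Fin (n + 1) → Bool) (Fin.snoc y d) =
      hammingDist x y + (if c ≠ d then 1 else 0) := by
  simp only [hammingDist, Finset.card_filter, Fin.sum_univ_castSucc, Fin.snoc_castSucc,
    Fin.snoc_last]

theorem cube_adj_snoc_same {n : ℕ} {x y : Fin n → Bool} (c : Bool)
    (h : (cubeGraph n).Adj x y) : (cubeGraph (n + 1)).Adj (Fin.snoc x c) (Fin.snoc y c) := by
  rw [cube_adj] at h ⊢
  rw [hammingDist_snoc, h]; simp

theorem cube_adj_snoc_flip {n : ℕ} (x : Fin n → Bool) (c : Bool) :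
    (cubeGraph (n + 1)).Adj (Fin.snoc x c) (Fin.snoc x (!c)) := by
  rw [cube_adj, hammingDist_snoc, hammingDist_self]
  simp

/-- extend a configuration on `Q_n` to the side `c` of `Q_{n+1}`. -/
def ext {n : ℕ} (c : Bool) (D : (Fin n → Bool) → ℕ) : (Fin (n + 1) → Bool) → ℕ :=
  fun y => if y (Fin.last n) = c then D (Fin.init y) else 0

/-- restrict a configuration on `Q_{n+1}` to the side `c`. -/
def res {n : ℕ} (c : Bool) (D : (Fin (n + 1) → Bool) → ℕ) : (Fin n → Bool) → ℕ :=
  fun x => D (Fin.snoc x c)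

theorem ext_snoc {n : ℕ} (c : Bool) (D : (Fin n → Bool) → ℕ) (x : Fin n → Bool) :
    ext c D (Fin.snoc x c) = D x := by
  simp [ext]

theorem pebstep_ext {n : ℕ} (c : Bool) {D D' : (Fin n → Bool) → ℕ}
    (h : PebStep 2 (cubeGraph n) D D') :
    PebStep 2 (cubeGraph (n + 1)) (ext c D) (ext c D') := by
  obtain ⟨u, u', hadj, hu, rfl⟩ := h
  have hne : u ≠ u' := (cubeGraph n).ne_of_adj hadj
  refine ⟨Fin.snoc u c, Fin.snoc u' c, cube_adj_snoc_same c hadj, by rwa [ext_snoc], ?_⟩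
  funext y
  by_cases hy : y (Fin.last n) = c
  · have hysnoc : Fin.snoc (Fin.init y) c = y := by rw [← hy]; exact Fin.snoc_init_self y
    have key : ∀ z : Fin n → Bool, y = Fin.snoc z c ↔ Fin.init y = z := by
      intro z
      constructor
      · rintro rfl; simp
      · rintro rfl; exact hysnoc.symm
    simp only [ext, hy, if_pos rfl, key]
    by_cases h1 : Fin.init y = u
    · simp [h1, ext_snoc]
    · by_cases h2 : Fin.init y = u'
      · simp [h1, h2, ext_snoc]
      · simp [h1, h2]
  · have h1 : y ≠ Fin.snoc u c := by
      intro h; apply hy; rw [h, Fin.snoc_last]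
    have h2 : y ≠ Fin.snoc u' c := by
      intro h; apply hy; rw [h, Fin.snoc_last]
    simp only [ext, if_neg hy, h1, h2, if_false]

theorem moves_ext {n : ℕ} (c : Bool) {D D' : (Fin n → Bool) → ℕ}
    (h : Moves (cubeGraph n) D D') : Moves (cubeGraph (n + 1)) (ext c D) (ext c D') :=
  Relation.ReflTransGen.lift (ext c) (fun _ _ => pebstep_ext c) _ _ h

theorem reach_ext {n : ℕ} (c : Bool) {D : (Fin n → Bool) → ℕ} {k : ℕ} {w : Fin n → Bool}
    (h : Reach (cubeGraph n) k D w) :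
    Reach (cubeGraph (n + 1)) k (ext c D) (Fin.snoc w c) := by
  obtain ⟨D', m, hk⟩ := h
  exact ⟨ext c D', moves_ext c m, by rwa [ext_snoc]⟩

theorem decomp {n : ℕ} (c : Bool) (D : (Fin (n + 1) → Bool) → ℕ) :
    D = ext c (res c D) + ext (!c) (res (!c) D) := by
  funext y
  by_cases hy : y (Fin.last n) = c
  · have h2 : ¬ y (Fin.last n) = !c := by rw [hy]; cases c <;> simp
    simp only [Pi.add_apply, ext, res, if_pos hy, if_neg h2, add_zero]
    rw [← hy, Fin.snoc_init_self]
  · have h2 : y (Fin.last n) = !c := by cases c <;> revert hy <;> cases y (Fin.last n) <;> simp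
    simp only [Pi.add_apply, ext, res, if_neg hy, if_pos h2, zero_add]
    rw [← h2, Fin.snoc_init_self]

theorem ext_res_le {n : ℕ} (c : Bool) (D : (Fin (n + 1) → Bool) → ℕ) (y : Fin (n + 1) → Bool) :
    ext c (res c D) y ≤ D y := by
  unfold ext res
  split_ifs with h
  · rw [← h, Fin.snoc_init_self]
  · exact Nat.zero_le _

theorem eq_snoc_iff {n : ℕ} {y : Fin (n + 1) → Bool} {b : Bool} (hy : y (Fin.last n) = b)
    (z : Fin n → Bool) : y = Fin.snoc z b ↔ Fin.init y = z := by
  constructor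
  · rintro rfl; simp
  · rintro rfl; rw [← hy]; exact (Fin.snoc_init_self y).symm

def eqv (n : ℕ) : ((Fin n → Bool) × Bool) ≃ (Fin (n + 1) → Bool) where
  toFun p := Fin.snoc p.1 p.2
  invFun y := (Fin.init y, y (Fin.last n))
  left_inv p := by simp
  right_inv y := Fin.snoc_init_self y

theorem sum_split {n : ℕ} (c : Bool) (D : (Fin (n + 1) → Bool) → ℕ) :
    ∑ y, D y = (∑ x, D (Fin.snoc x c)) + ∑ x, D (Fin.snoc x (!c)) := by
  rw [← Equiv.sum_comp (eqv n) D, Fintype.sum_prod_type]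
  simp only [eqv, Equiv.coe_fn_mk, Fintype.sum_bool]
  rw [← Finset.sum_add_distrib]
  refine Finset.sum_congr rfl fun x _ => ?_
  cases c <;> simp [add_comm]

theorem exists_le_sum {ι : Type*} [Fintype ι] [DecidableEq ι] :
    ∀ (t : ℕ) (g : ι → ℕ), t ≤ ∑ x, g x → ∃ f : ι → ℕ, (∀ x, f x ≤ g x) ∧ ∑ x, f x = t := by
  intro t
  induction t with
  | zero => exact fun g _ => ⟨0, fun x => Nat.zero_le _, by simp⟩
  | succ t ih =>
    intro g hg
    have hpos : ∃ x, 1 ≤ g x := by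
      by_contra h
      push_neg at h
      have h0 : ∑ x, g x = 0 := Finset.sum_eq_zero fun x _ => by have := h x; omega
      omega
    obtain ⟨x₀, hx₀⟩ := hpos
    have key : ∀ (h : ι → ℕ) (m : ℕ), ∑ x, Function.update h x₀ m x + h x₀ = (∑ x, h x) + m := by
      intro h m
      rw [Finset.sum_update_of_mem (Finset.mem_univ x₀)]
      have hd := Finset.sum_eq_sum_sdiff_singleton_add (Finset.mem_univ x₀) h
      omega
    have hsum := key g (g x₀ - 1)
    obtain ⟨f', hf'le, hf'sum⟩ := ih (Function.update g x₀ (g x₀ - 1)) (by omega)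
    refine ⟨Function.update f' x₀ (f' x₀ + 1), fun x => ?_, ?_⟩
    · rcases eq_or_ne x x₀ with rfl | hx
      · have := hf'le x; rw [Function.update_self] at this ⊢; omega
      · rw [Function.update_of_ne hx]
        have := hf'le x; rwa [Function.update_of_ne hx] at this
    · have := key f' (f' x₀ + 1)
      omega

/-- The result of folding `f x` pairs of pebbles from `snoc x !c` to `snoc x c`, for each `x`. -/
def foldTgt {n : ℕ} (c : Bool) (f : (Fin n → Bool) → ℕ) (D : (Fin (n + 1) → Bool) → ℕ) :
    (Fin (n + 1) → Bool) → ℕ :=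
  fun y => if y (Fin.last n) = c then D y + f (Fin.init y) else D y - 2 * f (Fin.init y)

theorem fold_moves {n : ℕ} (c : Bool) :
    ∀ (N : ℕ) (f : (Fin n → Bool) → ℕ) (D : (Fin (n + 1) → Bool) → ℕ),
      (∑ x, f x) = N → (∀ x, 2 * f x ≤ D (Fin.snoc x (!c))) →
      Moves (cubeGraph (n + 1)) D (foldTgt c f D) := by
  intro N
  induction N with
  | zero =>
    intro f D hsum _
    have hf : ∀ x, f x = 0 := by
      intro x
      have := Finset.sum_eq_zero_iff.mp hsum x (Finset.mem_univ x)
      omega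
    have : foldTgt c f D = D := by
      funext y
      unfold foldTgt
      rw [hf (Fin.init y)]
      split_ifs <;> omega
    rw [this]
    exact Relation.ReflTransGen.refl
  | succ N ih =>
    intro f D hsum hle
    have hpos : ∃ x, 1 ≤ f x := by
      by_contra h
      push_neg at h
      have h0 : ∑ x, f x = 0 := Finset.sum_eq_zero fun x _ => by have := h x; omega
      omega
    obtain ⟨x₀, hx₀⟩ := hpos
    set u : Fin (n + 1) → Bool := Fin.snoc x₀ (!c) with hu
    set u' : Fin (n + 1) → Bool := Fin.snoc x₀ c with hu'
    have hadj : (cubeGraph (n + 1)).Adj u u' := by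
      have := cube_adj_snoc_flip x₀ (!c)
      rwa [Bool.not_not] at this
    have hDu : 2 ≤ D u := le_trans (by omega) (hle x₀)
    set D1 : (Fin (n + 1) → Bool) → ℕ :=
      fun w => if w = u then D u - 2 else if w = u' then D u' + 1 else D w with hD1
    have hstep : PebStep 2 (cubeGraph (n + 1)) D D1 := ⟨u, u', hadj, hDu, rfl⟩
    set f' := Function.update f x₀ (f x₀ - 1) with hf'
    have hlast_u : u (Fin.last n) = !c := Fin.snoc_last _ _
    have hlast_u' : u' (Fin.last n) = c := Fin.snoc_last _ _
    have hne_cc : ¬ ((!c) = c) := by cases c <;> simp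
    have hsum' : ∑ x, f' x = N := by
      have h1 : ∑ x, f' x = f x₀ - 1 + ∑ x ∈ Finset.univ \ {x₀}, f x := by
        rw [hf', Finset.sum_update_of_mem (Finset.mem_univ x₀)]
      have hd := Finset.sum_eq_sum_sdiff_singleton_add (Finset.mem_univ x₀) f
      omega
    have hle' : ∀ x, 2 * f' x ≤ D1 (Fin.snoc x (!c)) := by
      intro x
      rcases eq_or_ne x x₀ with h | hx
      · rw [h, hf', Function.update_self, ← hu]
        simp only [hD1, if_true, eq_self_iff_true]
        have hl := hle x₀
        rw [← hu] at hl
        omega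
      · rw [hf', Function.update_of_ne hx, hD1]
        have h1 : ¬ (Fin.snoc x (!c) : Fin (n+1) → Bool) = u := by
          rw [hu]; intro h
          exact hx (by simpa using congrArg Fin.init h)
        have h2 : ¬ (Fin.snoc x (!c) : Fin (n+1) → Bool) = u' := by
          rw [hu']; intro h
          exact hne_cc (by simpa using congrArg (fun z => z (Fin.last n)) h)
        simp only [h1, h2, if_false]
        exact hle x
    have htgt : foldTgt c f' D1 = foldTgt c f D := by
      funext y
      unfold foldTgt
      by_cases hy : y (Fin.last n) = c
      · rw [if_pos hy, if_pos hy]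
        have hyu : y ≠ u := by intro h; rw [h, hlast_u] at hy; exact hne_cc hy
        rcases eq_or_ne (Fin.init y) x₀ with hx | hx
        · have hyu' : y = u' := (eq_snoc_iff hy x₀).mpr hx
          have hD1y : D1 y = D y + 1 := by
            simp only [hD1, if_neg hyu]
            rw [if_pos hyu', hyu']
          have hf1 : f' (Fin.init y) = f x₀ - 1 := by
            rw [hf', hx, Function.update_self]
          rw [hD1y, hf1, hx]
          omega
        · have hyu' : y ≠ u' := fun h => hx ((eq_snoc_iff hy x₀).mp h)
          simp only [hD1]
          simp only [if_neg hyu, if_neg hyu', hf', Function.update_of_ne hx]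
      · rw [if_neg hy, if_neg hy]
        have hy' : y (Fin.last n) = !c := by cases c <;> revert hy <;> cases y (Fin.last n) <;> simp
        have hyu' : y ≠ u' := by intro h; rw [h, hlast_u'] at hy; exact hy rfl
        rcases eq_or_ne (Fin.init y) x₀ with hx | hx
        · have hyu : y = u := (eq_snoc_iff hy' x₀).mpr hx
          have hD1y : D1 y = D y - 2 := by
            simp only [hD1]
            rw [if_pos hyu, hyu]

          have hf1 : f' (Fin.init y) = f x₀ - 1 := by
            rw [hf', hx, Function.update_self]
          have hl : 2 * f x₀ ≤ D y := by rw [hyu, hu]; exact hle x₀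
          rw [hD1y, hf1, hx]
          omega
        · have hyu : y ≠ u := fun h => hx ((eq_snoc_iff hy' x₀).mp h)
          simp only [hD1]
          simp only [if_neg hyu, if_neg hyu', hf', Function.update_of_ne hx]
    exact Relation.ReflTransGen.head hstep (htgt ▸ ih f' D1 hsum' hle')

theorem reachA {n : ℕ} (c : Bool) (D : (Fin (n + 1) → Bool) → ℕ) (w : Fin n → Bool)
    (ih1 : ∀ (E : (Fin n → Bool) → ℕ) v, 2 ^ n ≤ ∑ z, E z → Reach (cubeGraph n) 1 E v)
    (h : 2 ^ n ≤ ∑ x, D (Fin.snoc x c)) :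
    Reach (cubeGraph (n + 1)) 1 D (Fin.snoc w c) := by
  have h1 := ih1 (res c D) w (by simpa [res] using h)
  exact reach_mono (ext_res_le c D) (reach_ext c h1)

theorem reachB {n : ℕ} (c : Bool) (D : (Fin (n + 1) → Bool) → ℕ) (w : Fin n → Bool)
    (ih2 : ∀ (E : (Fin n → Bool) → ℕ) v,
      2 ^ (n + 1) + 1 ≤ (∑ z, E z) + ∑ z, E z % 2 → Reach (cubeGraph n) 2 E v)
    (h : 2 ^ (n + 1) + 1 ≤ (∑ x, D (Fin.snoc x (!c))) + ∑ x, D (Fin.snoc x (!c)) % 2) :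
    Reach (cubeGraph (n + 1)) 1 D (Fin.snoc w c) := by
  have h2 := ih2 (res (!c) D) w (by simpa [res] using h)
  have h3 := reach_mono (ext_res_le (!c) D) (reach_ext (!c) h2)
  have hadj : (cubeGraph (n + 1)).Adj (Fin.snoc w (!c)) (Fin.snoc w c) := by
    have := cube_adj_snoc_flip w (!c)
    rwa [Bool.not_not] at this
  exact reach_two_step hadj h3

theorem fold_apply {n : ℕ} (c : Bool) (D : (Fin (n + 1) → Bool) → ℕ) (t : ℕ)
    (ht : 2 * t + (∑ x, D (Fin.snoc x (!c)) % 2) ≤ ∑ x, D (Fin.snoc x (!c))) :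
    ∃ D2, Moves (cubeGraph (n + 1)) D D2 ∧
      (∑ x, D2 (Fin.snoc x c)) = (∑ x, D (Fin.snoc x c)) + t ∧
      (∑ x, D2 (Fin.snoc x (!c))) = (∑ x, D (Fin.snoc x (!c))) - 2 * t ∧
      (∑ x, D2 (Fin.snoc x (!c)) % 2) = ∑ x, D (Fin.snoc x (!c)) % 2 := by
  have hsumg : ∑ x, D (Fin.snoc x (!c)) =
      2 * (∑ x, D (Fin.snoc x (!c)) / 2) + ∑ x, D (Fin.snoc x (!c)) % 2 := by
    rw [Finset.mul_sum, ← Finset.sum_add_distrib]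
    exact Finset.sum_congr rfl fun x _ => by omega
  obtain ⟨f, hfle, hfsum⟩ :=
    exists_le_sum t (fun x => D (Fin.snoc x (!c)) / 2)
      (by simpa using (show t ≤ ∑ x, D (Fin.snoc x (!c)) / 2 by omega))
  have hfle2 : ∀ x, 2 * f x ≤ D (Fin.snoc x (!c)) := fun x => by
    have h := hfle x
    omega
  have hcne : ¬ ((!c) = c) := by cases c <;> simp
  have e1 : ∀ x : Fin n → Bool, foldTgt c f D (Fin.snoc x c) = D (Fin.snoc x c) + f x := by
    intro x; unfold foldTgt
    rw [Fin.snoc_last, if_pos rfl]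
    simp [Fin.init_snoc]
  have e2 : ∀ x : Fin n → Bool,
      foldTgt c f D (Fin.snoc x (!c)) = D (Fin.snoc x (!c)) - 2 * f x := by
    intro x; unfold foldTgt
    rw [Fin.snoc_last, if_neg hcne]
    simp [Fin.init_snoc]
  have h2f : ∑ x, 2 * f x = 2 * t := by rw [← Finset.mul_sum, hfsum]
  refine ⟨foldTgt c f D, fold_moves c _ f D rfl hfle2, ?_, ?_, ?_⟩
  · rw [Finset.sum_congr rfl fun x _ => e1 x, Finset.sum_add_distrib, hfsum]
  · have hkey : ∑ x, (D (Fin.snoc x (!c)) - 2 * f x) + ∑ x, 2 * f x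
        = ∑ x, D (Fin.snoc x (!c)) := by
      rw [← Finset.sum_add_distrib]
      exact Finset.sum_congr rfl fun x _ => by have := hfle2 x; omega
    rw [Finset.sum_congr rfl fun x _ => e2 x]
    omega
  · exact Finset.sum_congr rfl fun x _ => by
      rw [e2 x]; have := hfle2 x; omega

theorem pow_card_bound {n : ℕ} (g : (Fin n → Bool) → ℕ) :
    ∑ x, g x % 2 ≤ 2 ^ n :=
  calc ∑ x, g x % 2 ≤ ∑ _x : Fin n → Bool, 1 :=
        Finset.sum_le_sum fun x _ => by omega
    _ = 2 ^ n := by simp [Fintype.card_fun]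

theorem mod_le_sum {n : ℕ} (g : (Fin n → Bool) → ℕ) : ∑ x, g x % 2 ≤ ∑ x, g x :=
  Finset.sum_le_sum fun x _ => Nat.mod_le _ _

theorem main : ∀ n : ℕ,
    (∀ (D : (Fin n → Bool) → ℕ) (v : Fin n → Bool),
        2 ^ n ≤ ∑ z, D z → Reach (cubeGraph n) 1 D v) ∧
    (∀ (D : (Fin n → Bool) → ℕ) (v : Fin n → Bool),
        2 ^ (n + 1) + 1 ≤ (∑ z, D z) + ∑ z, D z % 2 → Reach (cubeGraph n) 2 D v) := by
  intro n
  induction n with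
  | zero =>
    have huniv : ∀ v : Fin 0 → Bool, (Finset.univ : Finset (Fin 0 → Bool)) = {v} := by
      intro v
      ext y
      simp only [Finset.mem_univ, Finset.mem_singleton, true_iff]
      exact funext fun i => i.elim0
    constructor
    · intro D v h
      rw [huniv v, Finset.sum_singleton] at h
      exact ⟨D, Relation.ReflTransGen.refl, by simpa using h⟩
    · intro D v h
      rw [huniv v, Finset.sum_singleton, Finset.sum_singleton] at h
      exact ⟨D, Relation.ReflTransGen.refl, by omega⟩
  | succ n ih =>
    obtain ⟨ih1, ih2⟩ := ih
    constructor
    · -- pebbling number 2^(n+1)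
      intro D v hp
      obtain ⟨w, c, rfl⟩ : ∃ w c, v = Fin.snoc w c :=
        ⟨Fin.init v, v (Fin.last n), (Fin.snoc_init_self v).symm⟩
      have hsplit : ∑ y, D y = (∑ x, D (Fin.snoc x c)) + ∑ x, D (Fin.snoc x (!c)) :=
        sum_split c D
      have hrBb := mod_le_sum (fun x => D (Fin.snoc x (!c)))
      by_cases hB : 2 ^ (n + 1) + 1 ≤ (∑ x, D (Fin.snoc x (!c))) + ∑ x, D (Fin.snoc x (!c)) % 2
      · exact reachB c D w ih2 hB
      · obtain ⟨D2, hmov, hA2, _, _⟩ := fold_apply c D (2 ^ n - ∑ x, D (Fin.snoc x c))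
          (by push_neg at hB; omega)
        refine reach_of_moves hmov (reachA c D2 w ih1 ?_)
        rw [hA2]; omega
    · -- the two-pebbling property
      intro D v hp
      obtain ⟨w, c, rfl⟩ : ∃ w c, v = Fin.snoc w c :=
        ⟨Fin.init v, v (Fin.last n), (Fin.snoc_init_self v).symm⟩
      have hsplit : ∑ y, D y = (∑ x, D (Fin.snoc x c)) + ∑ x, D (Fin.snoc x (!c)) :=
        sum_split c D
      have hsplit2 : ∑ y, D y % 2 =
          (∑ x, D (Fin.snoc x c) % 2) + ∑ x, D (Fin.snoc x (!c)) % 2 :=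
        sum_split c (fun y => D y % 2)
      have hrBb := mod_le_sum (fun x => D (Fin.snoc x (!c)))
      have hrAa := mod_le_sum (fun x => D (Fin.snoc x c))
      have hrB2 := pow_card_bound (fun x => D (Fin.snoc x (!c)))
      by_cases hA : 2 ^ (n + 1) + 1 ≤ (∑ x, D (Fin.snoc x c)) + ∑ x, D (Fin.snoc x c) % 2
      · have h2 := ih2 (res c D) w (by simpa [res] using hA)
        exact reach_mono (ext_res_le c D) (reach_ext c h2)
      · push_neg at hA
        obtain ⟨D2, hmov, hA2, hB2, hB2r⟩ :=
          fold_apply c D (2 ^ n - ∑ x, D (Fin.snoc x c)) (by omega)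
        refine reach_of_moves hmov ?_
        have hRA : Reach (cubeGraph (n + 1)) 1 (ext c (res c D2)) (Fin.snoc w c) := by
          refine reachA c (ext c (res c D2)) w ih1 ?_
          have : ∀ x, ext c (res c D2) (Fin.snoc x c) = D2 (Fin.snoc x c) := fun x =>
            ext_snoc c (res c D2) x
          rw [Finset.sum_congr rfl fun x _ => this x, hA2]
          omega
        have hRB : Reach (cubeGraph (n + 1)) 1 (ext (!c) (res (!c) D2)) (Fin.snoc w c) := by
          refine reachB c (ext (!c) (res (!c) D2)) w ih2 ?_
          have heq : ∀ x, ext (!c) (res (!c) D2) (Fin.snoc x (!c)) = D2 (Fin.snoc x (!c)) :=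
            fun x => ext_snoc (!c) (res (!c) D2) x
          have heqm : ∀ x : Fin n → Bool,
              ext (!c) (res (!c) D2) (Fin.snoc x (!c)) % 2 = D2 (Fin.snoc x (!c)) % 2 :=
            fun x => by rw [heq x]
          rw [Finset.sum_congr rfl fun x _ => heqm x,
            Finset.sum_congr rfl fun x _ => heq x, hB2, hB2r]
          omega
        have := reach_add hRA hRB
        rwa [← decomp c D2] at this

theorem weight_mono {n : ℕ} (v : Fin n → Bool) {E E' : (Fin n → Bool) → ℕ}
    (h : PebStep 2 (cubeGraph n) E E') :
    ∑ x, E' x * 2 ^ (n - hammingDist x v) ≤ ∑ x, E x * 2 ^ (n - hammingDist x v) := by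
  obtain ⟨u, u', hadj, hu, rfl⟩ := h
  have hne : u ≠ u' := (cubeGraph n).ne_of_adj hadj
  have hdist : hammingDist u v ≤ hammingDist u' v + 1 := by
    have ht := hammingDist_triangle u u' v
    have h1 : hammingDist u u' = 1 := cube_adj.mp hadj
    omega
  have hw : 2 ^ (n - hammingDist u' v) ≤ 2 * 2 ^ (n - hammingDist u v) := by
    have h2 : (2 : ℕ) * 2 ^ (n - hammingDist u v) = 2 ^ ((n - hammingDist u v) + 1) := by ring
    rw [h2]
    exact Nat.pow_le_pow_right (by norm_num) (by omega)
  have key : ∀ x : Fin n → Bool,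
      (if x = u then E u - 2 else if x = u' then E u' + 1 else E x) * 2 ^ (n - hammingDist x v)
        + (if x = u then 2 * 2 ^ (n - hammingDist u v) else 0)
      = E x * 2 ^ (n - hammingDist x v)
        + (if x = u' then 2 ^ (n - hammingDist u' v) else 0) := by
    intro x
    rcases eq_or_ne x u with rfl | h1
    · rw [if_pos rfl, if_pos rfl, if_neg hne]
      have h3 : E x = (E x - 2) + 2 := by omega
      conv_rhs => rw [h3]
      ring
    · rcases eq_or_ne x u' with rfl | h2
      · rw [if_neg h1, if_pos rfl, if_neg h1, if_pos rfl]
        ring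
      · rw [if_neg h1, if_neg h2, if_neg h1, if_neg h2]
  have hβ : (∑ x, (fun w => if w = u then E u - 2 else if w = u' then E u' + 1 else E w) x
        * 2 ^ (n - hammingDist x v))
      = ∑ x, (if x = u then E u - 2 else if x = u' then E u' + 1 else E x)
        * 2 ^ (n - hammingDist x v) := rfl
  rw [hβ]
  have hcong := Finset.sum_congr (rfl : (Finset.univ : Finset (Fin n → Bool)) = Finset.univ)
    (fun x _ => key x)
  rw [Finset.sum_add_distrib, Finset.sum_add_distrib] at hcong
  simp only [Finset.sum_ite_eq', Finset.mem_univ, if_true] at hcong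
  omega

theorem unsolvable (n : ℕ) :
    ∃ D : (Fin n → Bool) → ℕ, (∑ w, D w) = 2 ^ n - 1 ∧
      ∃ v, ¬ Solvable 2 (cubeGraph n) D v := by
  classical
  set u0 : Fin n → Bool := fun _ => false with hu0
  set v : Fin n → Bool := fun _ => true with hv0
  refine ⟨fun x => if x = u0 then 2 ^ n - 1 else 0, ?_, v, ?_⟩
  · simp
  · rintro ⟨D', hmoves, hv⟩
    have hmono : ∀ E E' : (Fin n → Bool) → ℕ,
        Relation.ReflTransGen (PebStep 2 (cubeGraph n)) E E' →
        ∑ x, E' x * 2 ^ (n - hammingDist x v) ≤ ∑ x, E x * 2 ^ (n - hammingDist x v) := by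
      intro E E' h
      induction h with
      | refl => exact le_refl _
      | tail _ hstep ih => exact le_trans (weight_mono v hstep) ih
    have h1 := hmono _ _ hmoves
    have hdu0 : hammingDist u0 v = n := by
      have : (Finset.univ.filter fun i : Fin n => u0 i ≠ v i) = Finset.univ := by
        ext i; simp [hu0, hv0]
      show (Finset.univ.filter fun i : Fin n => u0 i ≠ v i).card = n
      rw [this, Finset.card_univ, Fintype.card_fin]
    have hinit : ∑ x, (if x = u0 then 2 ^ n - 1 else 0) * 2 ^ (n - hammingDist x v)
        = 2 ^ n - 1 := by
      rw [Finset.sum_congr rfl (fun x _ => ite_mul (x = u0) (2 ^ n - 1) 0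
        (2 ^ (n - hammingDist x v)))]
      simp only [zero_mul, Finset.sum_ite_eq', Finset.mem_univ, if_true, hdu0]
      simp
    have hfin : D' v * 2 ^ (n - hammingDist v v) ≤ ∑ x, D' x * 2 ^ (n - hammingDist x v) :=
      Finset.single_le_sum (f := fun x => D' x * 2 ^ (n - hammingDist x v))
        (fun x _ => Nat.zero_le _) (Finset.mem_univ v)
    rw [hammingDist_self, Nat.sub_zero] at hfin
    have hpow : (1 : ℕ) ≤ 2 ^ n := Nat.one_le_two_pow
    have h2 : 2 ^ n ≤ D' v * 2 ^ n := Nat.le_mul_of_pos_left _ (by omega)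
    rw [hinit] at h1
    omega

/-- the 2-pebbling number of the hypercube `Q_n` is `2^n`. -/
theorem stmt8 (n : ℕ) :
    (∀ D : (Fin n → Bool) → ℕ, (∑ w, D w) = 2 ^ n →
        ∀ v, Solvable 2 (cubeGraph n) D v) ∧
    (∃ D : (Fin n → Bool) → ℕ, (∑ w, D w) = 2 ^ n - 1 ∧
        ∃ v, ¬ Solvable 2 (cubeGraph n) D v) := by
  refine ⟨fun D hsum v => ?_, unsolvable n⟩
  exact (main n).1 D v (le_of_eq hsum.symm)
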